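/- For every a > 0, b ∈ (0,1), and z ∈ (0,1), the regularized incomplete beta function satisfies I_z(a,b) ≤ z^a (1−z)^{b−1} a^{b−1} / Γ(b). -/

import Mathlib

open MeasureTheory ProbabilityTheory Real
open scoped RealInnerProductSpace ENNReal NNReal

/-- The regularized incomplete beta function I_z(a,b). -/
noncomputable def regIncBeta (z a b : ℝ) : ℝ :=
  (∫ t in Set.Ioo 0 z, t ^ (a-1) * (1-t) ^ (b-1)) /
    (Real.Gamma a * Real.Gamma b / Real.Gamma (a+b))

lemma wendel (a b : ℝ) (ha : 0 < a) (hb0 : 0 < b) (hb1 : b < 1) :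
    Real.Gamma (a + b) ≤ a ^ b * Real.Gamma a := by
  have h := Real.Gamma_mul_add_mul_le_rpow_Gamma_mul_rpow_Gamma (s := a) (t := a + 1)
    (a := 1 - b) (b := b) ha (by linarith) (by linarith) hb0 (by ring)
  have he : (1 - b) * a + b * (a + 1) = a + b := by ring
  rw [he, Real.Gamma_add_one ha.ne'] at h
  have hg : 0 < Real.Gamma a := Real.Gamma_pos_of_pos ha
  calc Real.Gamma (a + b) ≤ Real.Gamma a ^ (1 - b) * (a * Real.Gamma a) ^ b := h
    _ = a ^ b * Real.Gamma a := by
        rw [Real.mul_rpow ha.le hg.le, ← mul_assoc,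
          mul_comm (Real.Gamma a ^ (1 - b)) (a ^ b), mul_assoc,
          ← Real.rpow_add hg]
        norm_num

theorem stmt_10 (a b z : ℝ) (ha : 0 < a) (hb0 : 0 < b) (hb1 : b < 1)
    (hz0 : 0 < z) (hz1 : z < 1) :
    regIncBeta z a b ≤ z ^ a * (1-z) ^ (b-1) * a ^ (b-1) / Real.Gamma b := by
  have hg : 0 < Real.Gamma a := Real.Gamma_pos_of_pos ha
  have hgb : 0 < Real.Gamma b := Real.Gamma_pos_of_pos hb0
  have hgab : 0 < Real.Gamma (a + b) := Real.Gamma_pos_of_pos (by linarith)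
  have h1z : (0:ℝ) < 1 - z := by linarith
  -- integrability of the bounding function
  have hig : IntegrableOn (fun t : ℝ => t ^ (a-1) * (1-z) ^ (b-1)) (Set.Ioo 0 z) := by
    apply Integrable.mul_const
    have := (intervalIntegral.intervalIntegrable_rpow' (a := 0) (b := z) (r := a - 1)
      (by linarith)).1
    exact this.mono_set Set.Ioo_subset_Ioc_self
  -- pointwise bound
  have hpt : ∀ t ∈ Set.Ioo (0:ℝ) z, t ^ (a-1) * (1-t) ^ (b-1) ≤ t ^ (a-1) * (1-z) ^ (b-1) := by
    intro t ht
    exact mul_le_mul_of_nonneg_left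
      (Real.rpow_le_rpow_of_nonpos h1z (by linarith [ht.2]) (by linarith))
      (Real.rpow_nonneg ht.1.le _)
  -- integrability of the integrand
  have hf : IntegrableOn (fun t : ℝ => t ^ (a-1) * (1-t) ^ (b-1)) (Set.Ioo 0 z) := by
    refine hig.mono' ?_ ?_
    · apply ContinuousOn.aestronglyMeasurable _ measurableSet_Ioo
      apply ContinuousOn.mul
      · exact continuousOn_id.rpow_const fun x hx => Or.inl hx.1.ne'
      · exact (continuousOn_const.sub continuousOn_id).rpow_const
          fun x hx => Or.inl (by simp; linarith [hx.2])
    · refine (ae_restrict_iff' measurableSet_Ioo).2 (ae_of_all _ fun t ht => ?_)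
      rw [Real.norm_eq_abs, abs_of_nonneg
        (mul_nonneg (Real.rpow_nonneg ht.1.le _) (Real.rpow_nonneg (by linarith [ht.2]) _))]
      exact hpt t ht
  -- bound on numerator
  have hN : (∫ t in Set.Ioo 0 z, t ^ (a-1) * (1-t) ^ (b-1))
      ≤ z ^ a * (1-z) ^ (b-1) / a := by
    have h1 := setIntegral_mono_on hf hig measurableSet_Ioo hpt
    have h2 : (∫ t in Set.Ioo 0 z, t ^ (a-1) * (1-z) ^ (b-1))
        = z ^ a * (1-z) ^ (b-1) / a := by
      rw [integral_mul_const]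
      have : (∫ t in Set.Ioo 0 z, t ^ (a-1)) = ∫ t in (0:ℝ)..z, t ^ (a-1) := by
        rw [intervalIntegral.integral_of_le hz0.le, integral_Ioc_eq_integral_Ioo]
      rw [this, integral_rpow (Or.inl (by linarith))]
      rw [Real.zero_rpow (by linarith : a - 1 + 1 ≠ 0)]
      have : a - 1 + 1 = a := by ring
      rw [this]
      ring
    linarith
  -- bound on denominator
  have hD : Real.Gamma b / a ^ b ≤ Real.Gamma a * Real.Gamma b / Real.Gamma (a+b) := by
    have hw := wendel a b ha hb0 hb1
    have hab : 0 < a ^ b := Real.rpow_pos_of_pos ha b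
    have h1 : Real.Gamma a * Real.Gamma b / (a ^ b * Real.Gamma a)
        ≤ Real.Gamma a * Real.Gamma b / Real.Gamma (a+b) :=
      div_le_div_of_nonneg_left (by positivity) hgab hw
    have h2 : Real.Gamma a * Real.Gamma b / (a ^ b * Real.Gamma a)
        = Real.Gamma b / a ^ b := by
      field_simp
    linarith
  -- combine
  have hDb : 0 < Real.Gamma b / a ^ b := by positivity
  have hNb : 0 ≤ z ^ a * (1-z) ^ (b-1) / a := by positivity
  have hmain : regIncBeta z a b ≤ (z ^ a * (1-z) ^ (b-1) / a) / (Real.Gamma b / a ^ b) :=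
    div_le_div₀ hNb hN hDb hD
  have heq : (z ^ a * (1-z) ^ (b-1) / a) / (Real.Gamma b / a ^ b)
      = z ^ a * (1-z) ^ (b-1) * a ^ (b-1) / Real.Gamma b := by
    rw [Real.rpow_sub ha, Real.rpow_one]
    field_simp
  rw [heq] at hmain; exact hmain
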